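/- Let Z ∈ ℝ^N be sorted in descending order (z₁ ≥ z₂ ≥ ... ≥ z_N) and let Y be the Euclidean projection of Z onto the bounded simplex D = {p ∈ [0,1]^N : Σ pₙ ≤ M}. Then Y is also sorted in descending order. -/

import Mathlib

lemma pair_sum_diff {α : Type*} [Fintype α] [DecidableEq α] (f g : α → ℝ) (i j : α)
    (hne : i ≠ j) (hfg : ∀ k, k ≠ i → k ≠ j → f k = g k) :
    ∑ k, f k - ∑ k, g k = (f i + f j) - (g i + g j) := by
  have hjmem : j ∈ (Finset.univ : Finset α).erase i :=
    Finset.mem_erase.2 ⟨hne.symm, Finset.mem_univ j⟩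
  have hf : ∑ k, f k = f i + (f j + ∑ k ∈ ((Finset.univ.erase i).erase j), f k) := by
    rw [Finset.add_sum_erase _ f hjmem, Finset.add_sum_erase _ f (Finset.mem_univ i)]
  have hg : ∑ k, g k = g i + (g j + ∑ k ∈ ((Finset.univ.erase i).erase j), g k) := by
    rw [Finset.add_sum_erase _ g hjmem, Finset.add_sum_erase _ g (Finset.mem_univ i)]
  have htail : ∑ k ∈ ((Finset.univ.erase i).erase j), f k
      = ∑ k ∈ ((Finset.univ.erase i).erase j), g k := by
    refine Finset.sum_congr rfl fun k hk => ?_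
    have hkj := (Finset.mem_erase.1 hk).1
    have hki := (Finset.mem_erase.1 (Finset.mem_erase.1 hk).2).1
    exact hfg k hki hkj
  rw [hf, hg, htail]; ring

lemma eucl_norm_sq (N : ℕ) (x : EuclideanSpace ℝ (Fin N)) :
    ‖x‖ ^ 2 = ∑ k, (x k) ^ 2 := by
  rw [EuclideanSpace.norm_eq, Real.sq_sqrt (by positivity)]
  simp [Real.norm_eq_abs, sq_abs]

theorem stmt_4 (N : ℕ) (M : ℝ) (hM : 0 < M)
    (Z Y : EuclideanSpace ℝ (Fin N))
    (hsort : ∀ i j : Fin N, i ≤ j → Z j ≤ Z i)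
    (D : Set (EuclideanSpace ℝ (Fin N)))
    (hD : D = {p | (∀ n, 0 ≤ p n ∧ p n ≤ 1) ∧ ∑ n, p n ≤ M})
    (hYD : Y ∈ D) (hproj : ∀ P ∈ D, ‖Z - Y‖ ≤ ‖Z - P‖) :
    ∀ i j : Fin N, i ≤ j → Y j ≤ Y i := by
  subst hD
  intro i j hij
  by_contra h
  push_neg at h
  have hne : i ≠ j := by rintro rfl; exact lt_irrefl _ h
  -- Y' is Y with coordinates i and j swapped
  set Y' : EuclideanSpace ℝ (Fin N) := WithLp.toLp 2 (fun k => Y (Equiv.swap i j k)) with hY'def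
  have hY'i : Y' i = Y j := by
    show Y (Equiv.swap i j i) = Y j; rw [Equiv.swap_apply_left]
  have hY'j : Y' j = Y i := by
    show Y (Equiv.swap i j j) = Y i; rw [Equiv.swap_apply_right]
  have hY'k : ∀ k, k ≠ i → k ≠ j → Y' k = Y k := by
    intro k hki hkj
    show Y (Equiv.swap i j k) = Y k; rw [Equiv.swap_apply_of_ne_of_ne hki hkj]
  obtain ⟨hYbd, hYsum⟩ := hYD
  have hY'bd : ∀ n, 0 ≤ Y' n ∧ Y' n ≤ 1 := fun n => hYbd _
  have hY'sum : ∑ n, Y' n = ∑ n, Y n := Equiv.sum_comp (Equiv.swap i j) Y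
  have hY'D : Y' ∈ {p : EuclideanSpace ℝ (Fin N) | (∀ n, 0 ≤ p n ∧ p n ≤ 1) ∧ ∑ n, p n ≤ M} :=
    ⟨hY'bd, by rw [hY'sum]; exact hYsum⟩
  -- ‖Z - Y'‖² ≤ ‖Z - Y‖²
  have hsub : ∀ (W : EuclideanSpace ℝ (Fin N)) (k : Fin N), (Z - W) k = Z k - W k := by
    intro W k; simp
  have hZij : Z j ≤ Z i := hsort i j hij
  have hdiff : ‖Z - Y'‖ ^ 2 - ‖Z - Y‖ ^ 2 = 2 * (Z i - Z j) * (Y i - Y j) := by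
    rw [eucl_norm_sq, eucl_norm_sq]
    simp only [hsub]
    have heq := pair_sum_diff (fun k => (Z k - Y' k) ^ 2) (fun k => (Z k - Y k) ^ 2) i j hne
      (fun k hki hkj => by show (Z k - Y' k) ^ 2 = (Z k - Y k) ^ 2; rw [hY'k k hki hkj])
    simp only at heq
    rw [heq, hY'i, hY'j]; ring
  have hb2 : ‖Z - Y'‖ ^ 2 ≤ ‖Z - Y‖ ^ 2 := by nlinarith [hdiff]
  -- midpoint
  set m : EuclideanSpace ℝ (Fin N) := (2:ℝ)⁻¹ • (Y + Y') with hmdef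
  have hmk : ∀ k, m k = (2:ℝ)⁻¹ * (Y k + Y' k) := by intro k; simp [hmdef, mul_add]
  have hmD : m ∈ {p : EuclideanSpace ℝ (Fin N) | (∀ n, 0 ≤ p n ∧ p n ≤ 1) ∧ ∑ n, p n ≤ M} := by
    constructor
    · intro n
      rw [hmk]
      constructor
      · have := (hYbd n).1; have := (hY'bd n).1; linarith
      · have := (hYbd n).2; have := (hY'bd n).2; linarith
    · simp only [hmk]
      rw [← Finset.mul_sum, Finset.sum_add_distrib, hY'sum]
      linarith
  have hZm : Z - m = (2:ℝ)⁻¹ • ((Z - Y) + (Z - Y')) := by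
    rw [hmdef]; module
  have hnormZm : ‖Z - m‖ = (2:ℝ)⁻¹ * ‖(Z - Y) + (Z - Y')‖ := by
    rw [hZm, norm_smul]; simp
  have hpar := parallelogram_law_with_norm ℝ (Z - Y) (Z - Y')
  have hle1 : ‖Z - Y‖ ≤ ‖Z - m‖ := hproj m hmD
  have huv : (Z - Y) - (Z - Y') = Y' - Y := by abel
  have hzero : ‖Y' - Y‖ = 0 := by
    rw [hnormZm] at hle1
    rw [huv] at hpar
    set a := ‖Z - Y‖ with ha
    set b := ‖Z - Y'‖ with hb
    set s := ‖(Z - Y) + (Z - Y')‖ with hs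
    set d := ‖Y' - Y‖ with hd
    have ha0 : (0:ℝ) ≤ a := norm_nonneg _
    have hd0 : (0:ℝ) ≤ d := norm_nonneg _
    clear_value a b s d
    have hle1' : 2 * a ≤ s := by linarith
    have hs2 : 4 * a ^ 2 ≤ s ^ 2 := by nlinarith
    have hpar' : s ^ 2 + d ^ 2 = 2 * a ^ 2 + 2 * b ^ 2 := by
      rw [sq, sq, sq, sq]; linarith [hpar]
    have hdsq : d ^ 2 ≤ 0 := by linarith
    have : d ^ 2 = 0 := le_antisymm hdsq (by positivity)
    exact pow_eq_zero_iff (n := 2) (by norm_num) |>.1 this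
  have hYY' : Y' = Y := by
    have := norm_eq_zero.1 hzero
    have := sub_eq_zero.1 this
    exact this
  have : Y i = Y j := by rw [← hY'i, hYY']
  linarith
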